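/- For all integers 2 ≤ j ≤ n with n ≥ 17, one has (j/n)^{(j-2)/4} ≤ (6/7)^{j-2} + (7/8)^{n-j}. -/

import Mathlib

open Real

lemma pade_log {x : ℝ} (hx : 1 ≤ x) : 2*(x-1)/(x+1) ≤ Real.log x := by
  have hmono : MonotoneOn (fun t : ℝ => Real.log t + 4/(t+1)) (Set.Ici 1) := by
    have hderiv : ∀ t ∈ Set.Ioi (1:ℝ),
        HasDerivAt (fun t : ℝ => Real.log t + 4/(t+1)) (t⁻¹ + (-4/(t+1)^2)) t := by
      intro t ht
      have ht' : (1:ℝ) < t := ht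
      have ht0 : t ≠ 0 := by linarith
      have ht1 : t + 1 ≠ 0 := by linarith
      have h1 : HasDerivAt Real.log t⁻¹ t := Real.hasDerivAt_log ht0
      have h2 : HasDerivAt (fun t : ℝ => t + 1) 1 t := (hasDerivAt_id t).add_const 1
      have h3 : HasDerivAt (fun t : ℝ => (t+1)⁻¹) (-1/(t+1)^2) t := by
        exact h2.inv ht1
      have h4 : HasDerivAt (fun t : ℝ => 4/(t+1)) (-4/(t+1)^2) t := by
        have h5 := h3.const_mul (4:ℝ)
        have e1 : (fun t : ℝ => 4 * (t+1)⁻¹) = (fun t : ℝ => 4/(t+1)) := by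
          ext y; rw [div_eq_mul_inv]
        have e2 : 4 * (-1/(t+1)^2) = -4/(t+1)^2 := by ring
        rw [e1, e2] at h5
        exact h5
      exact h1.add h4
    apply monotoneOn_of_deriv_nonneg (convex_Ici 1)
    · apply ContinuousOn.add
      · exact Real.continuousOn_log.mono (by intro y hy; simp at hy ⊢; intro h; linarith)
      · apply ContinuousOn.div continuousOn_const (by fun_prop)
        intro y hy; simp at hy; intro h; linarith
    · intro t ht
      rw [interior_Ici] at ht
      exact (hderiv t ht).differentiableAt.differentiableWithinAt
    · intro t ht
      rw [interior_Ici] at ht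
      rw [(hderiv t ht).deriv]
      have h1 : (1:ℝ) < t := ht
      rw [← sub_nonneg]
      have e : t⁻¹ + -4/(t+1)^2 - 0 = (t-1)^2 / (t * (t+1)^2) := by
        field_simp; ring
      rw [e]
      positivity
  have hx1 : (0:ℝ) < x + 1 := by linarith
  have hle := hmono (Set.mem_Ici.mpr (le_refl 1)) (Set.mem_Ici.mpr hx) hx
  simp only [Real.log_one] at hle
  have key : 2 - 4/(x+1) ≤ Real.log x := by
    have : (0:ℝ) + 4/(1+1) = 2 := by norm_num
    linarith [hle]
  have e : 2*(x-1)/(x+1) = 2 - 4/(x+1) := by field_simp; ring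
  rw [e]; exact key

lemma log_87 : Real.log (8/7) ≤ 1344/10000 := by
  have h1 : (8/7 : ℝ) ≤ (1.0084)^(16:ℕ) := by norm_num
  have h2 : Real.log (8/7) ≤ Real.log ((1.0084)^(16:ℕ)) :=
    Real.log_le_log (by norm_num) h1
  rw [Real.log_pow] at h2
  have h3 : Real.log (1.0084) ≤ 1.0084 - 1 := Real.log_le_sub_one_of_pos (by norm_num)
  calc Real.log (8/7) ≤ 16 * Real.log 1.0084 := by push_cast at h2; linarith
    _ ≤ 16 * (1.0084 - 1) := by linarith
    _ ≤ 1344/10000 := by norm_num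
theorem ratio_pow_le (n j : ℕ) (hj : 2 ≤ j) (hjn : j ≤ n) (hn : 17 ≤ n) :
    ((j : ℝ) / (n : ℝ)) ^ (((j : ℝ) - 2) / 4) ≤
      ((6 : ℝ) / 7) ^ (j - 2) + ((7 : ℝ) / 8) ^ (n - j) := by
  have hb17 : (17:ℝ) ≤ (n:ℝ) := by exact_mod_cast hn
  have ha2 : (2:ℝ) ≤ (j:ℝ) := by exact_mod_cast hj
  have hab : (j:ℝ) ≤ (n:ℝ) := by exact_mod_cast hjn
  have hb0 : (0:ℝ) < (n:ℝ) := by linarith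
  have ha0 : (0:ℝ) < (j:ℝ) := by linarith
  have he0 : (0:ℝ) ≤ ((j:ℝ) - 2)/4 := by linarith
  have hcast2 : ((j - 2 : ℕ) : ℝ) = (j:ℝ) - 2 := by
    rw [Nat.cast_sub hj]; norm_num
  have hcastnj : ((n - j : ℕ) : ℝ) = (n:ℝ) - (j:ℝ) := by
    rw [Nat.cast_sub hjn]
  by_cases hc : (j:ℝ)/(n:ℝ) ≤ 1296/2401
  · -- first term dominates
    have h1 : ((j:ℝ)/(n:ℝ)) ^ (((j:ℝ) - 2)/4) ≤ ((1296/2401:ℝ)) ^ (((j:ℝ) - 2)/4) :=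
      Real.rpow_le_rpow (div_nonneg ha0.le hb0.le) hc he0
    have e3 : ((1296/2401:ℝ)) ^ (((j:ℝ) - 2)/4) = ((6:ℝ)/7) ^ (j - 2) := by
      have e4 : (1296/2401:ℝ) = ((6:ℝ)/7) ^ ((4:ℕ):ℝ) := by
        rw [Real.rpow_natCast]; norm_num
      rw [e4, ← Real.rpow_mul (by norm_num : (0:ℝ) ≤ 6/7)]
      have e5 : ((4:ℕ):ℝ) * (((j:ℝ) - 2)/4) = ((j - 2 : ℕ) : ℝ) := by
        rw [hcast2]; push_cast; ring
      rw [e5, Real.rpow_natCast]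
    rw [e3] at h1
    have : (0:ℝ) ≤ ((7:ℝ)/8) ^ (n - j) := by positivity
    linarith
  · -- second term dominates
    push_neg at hc
    have hca : 1296 * (n:ℝ) < 2401 * (j:ℝ) := by
      rw [div_lt_div_iff₀ (by norm_num) hb0] at hc; linarith
    have hx : (1:ℝ) ≤ (n:ℝ)/(j:ℝ) := (one_le_div ha0).mpr hab
    have hpade := pade_log hx
    have e2 : 2*((n:ℝ)/(j:ℝ) - 1)/((n:ℝ)/(j:ℝ) + 1) = 2*((n:ℝ) - (j:ℝ))/((j:ℝ) + (n:ℝ)) := by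
      rw [div_eq_div_iff (by positivity) (by positivity)]
      field_simp
      ring_nf
    rw [e2] at hpade
    have hgoal2 : ((j:ℝ)/(n:ℝ)) ^ (((j:ℝ) - 2)/4) ≤ ((7:ℝ)/8) ^ (n - j) := by
      rw [Real.rpow_def_of_pos (div_pos ha0 hb0)]
      have e6 : ((7:ℝ)/8) ^ (n - j) = Real.exp (((n:ℝ) - (j:ℝ)) * Real.log (7/8)) := by
        rw [← hcastnj, ← Real.log_pow, Real.exp_log (by positivity)]
      rw [e6, Real.exp_le_exp]
      have e7 : Real.log ((j:ℝ)/(n:ℝ)) = -Real.log ((n:ℝ)/(j:ℝ)) := by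
        rw [← Real.log_inv, inv_div]
      have e8 : Real.log ((7:ℝ)/8) = -Real.log (8/7) := by
        rw [← Real.log_inv]; norm_num
      rw [e7, e8]
      have hba : (0:ℝ) ≤ (n:ℝ) - (j:ℝ) := by linarith
      have hA : ((n:ℝ) - (j:ℝ)) * Real.log (8/7) ≤ ((n:ℝ) - (j:ℝ)) * (1344/10000) :=
        mul_le_mul_of_nonneg_left log_87 hba
      have hkey : (2688/10000:ℝ) * ((j:ℝ) + (n:ℝ)) ≤ (j:ℝ) - 2 := by linarith
      have hB : ((n:ℝ) - (j:ℝ)) * (1344/10000) ≤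
          (((j:ℝ) - 2)/4) * (2*((n:ℝ) - (j:ℝ))/((j:ℝ) + (n:ℝ))) := by
        rw [← sub_nonneg]
        have e9 : (((j:ℝ) - 2)/4) * (2*((n:ℝ) - (j:ℝ))/((j:ℝ) + (n:ℝ)))
            - ((n:ℝ) - (j:ℝ)) * (1344/10000)
            = (((n:ℝ) - (j:ℝ)) * (((j:ℝ) - 2) - (2688/10000) * ((j:ℝ) + (n:ℝ))))
              / (2 * ((j:ℝ) + (n:ℝ))) := by
          field_simp
          ring
        rw [e9]
        apply div_nonneg
        · exact mul_nonneg hba (by linarith)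
        · linarith
      have hC : (((j:ℝ) - 2)/4) * (2*((n:ℝ) - (j:ℝ))/((j:ℝ) + (n:ℝ)))
          ≤ (((j:ℝ) - 2)/4) * Real.log ((n:ℝ)/(j:ℝ)) :=
        mul_le_mul_of_nonneg_left hpade he0
      nlinarith [hA, hB, hC]
    have : (0:ℝ) ≤ ((6:ℝ)/7) ^ (j - 2) := by positivity
    linarith
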